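/- Let (T_s)_{s∈S} be a bounded representation of a commutative monoid (S,+) on a Banach space E and let P ∈ L(E) be a bounded projection commuting with every T_s. If (a) the restrictions T_s|_{ker P} converge to 0 in the operator norm of L(ker P), and (b) the set {T_s|_{PE} : s ∈ S} is relatively compact in L(PE), then the semigroup at infinity 𝒯_∞ is non-empty and compact, and the projection at infinity P_∞ satisfies P_∞E ⊆ PE and ker P ⊆ ker P_∞. If additionally (c) for every x ∈ PE with x ≠ 0 the net (T_s x)_{s∈S} does not converge to 0, then P_∞ = P. -/

import Mathlib

set_option maxHeartbeats 1000000


open Filter Topology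

/-- The pre-order on a commutative monoid `S`: `s ≤ t` iff `t = s + r` for some `r ∈ S`. -/
def sgLE {S : Type*} [AddCommMonoid S] (s t : S) : Prop := ∃ r : S, t = s + r

/-- The filter of "tails" of the directed set `(S, sgLE)`. -/
def sgFilter (S : Type*) [AddCommMonoid S] : Filter S :=
  ⨅ s : S, Filter.principal {t | sgLE s t}

/-- The semigroup at infinity with respect to the operator norm:
`𝒯_∞ = ⋂_{r ∈ S} closure {T_s : s ≥ r}`. -/
def sgAtInfty {E : Type*} [NormedAddCommGroup E] [NormedSpace ℝ E]
    {S : Type*} [AddCommMonoid S] (T : S → E →L[ℝ] E) : Set (E →L[ℝ] E) :=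
  ⋂ r : S, closure (T '' {s | sgLE r s})

/-- `P` is the neutral element of the semigroup at infinity (the projection at infinity). -/
def IsNeutralAtInfty {E : Type*} [NormedAddCommGroup E] [NormedSpace ℝ E]
    {S : Type*} [AddCommMonoid S] (T : S → E →L[ℝ] E) (P : E →L[ℝ] E) : Prop :=
  P ∈ sgAtInfty T ∧ ∀ A ∈ sgAtInfty T, P * A = A ∧ A * P = A

/-- The restriction of a bounded operator to an invariant subspace, as a bounded operator on that
subspace (with the inherited norm). -/
def restrictCLM {E : Type*} [NormedAddCommGroup E] [NormedSpace ℝ E]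
    (A : E →L[ℝ] E) (p : Submodule ℝ E) (h : ∀ x ∈ p, A x ∈ p) : p →L[ℝ] p where
  toLinearMap := (A : E →ₗ[ℝ] E).restrict h
  cont := Continuous.subtype_mk ((map_continuous A).comp continuous_subtype_val) _

lemma sgLE_refl {S : Type*} [AddCommMonoid S] (s : S) : sgLE s s := ⟨0, (add_zero s).symm⟩

lemma sgLE_trans {S : Type*} [AddCommMonoid S] {a b c : S} (h1 : sgLE a b) (h2 : sgLE b c) :
    sgLE a c := by
  obtain ⟨r, rfl⟩ := h1; obtain ⟨r', rfl⟩ := h2; exact ⟨r + r', add_assoc _ _ _⟩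

lemma sgFilter_eventually {S : Type*} [AddCommMonoid S] (p : S → Prop) :
    (∀ᶠ s in sgFilter S, p s) ↔ ∃ r : S, ∀ s, sgLE r s → p s := by
  haveI : Nonempty S := ⟨0⟩
  have hdir : Directed (· ≥ ·) (fun s : S => Filter.principal {t | sgLE s t}) := by
    intro a b
    refine ⟨a + b, Filter.principal_mono.mpr ?_, Filter.principal_mono.mpr ?_⟩
    · intro u hu; exact sgLE_trans ⟨b, rfl⟩ hu
    · intro u hu; exact sgLE_trans ⟨a, add_comm a b⟩ hu
  rw [Filter.eventually_iff]
  rw [show sgFilter S = ⨅ s : S, Filter.principal {t | sgLE s t} from rfl]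
  rw [Filter.mem_iInf_of_directed hdir]
  simp only [Filter.mem_principal, Set.subset_def, Set.mem_setOf_eq]

lemma mem_sgAtInfty_iff {E : Type*} [NormedAddCommGroup E] [NormedSpace ℝ E]
    {S : Type*} [AddCommMonoid S] (T : S → E →L[ℝ] E) (A : E →L[ℝ] E) :
    A ∈ sgAtInfty T ↔ ∀ r : S, ∀ ε : ℝ, 0 < ε → ∃ s, sgLE r s ∧ ‖T s - A‖ < ε := by
  simp only [sgAtInfty, Set.mem_iInter, Metric.mem_closure_iff]
  constructor
  · intro h r ε hε
    obtain ⟨b, ⟨s, hs, rfl⟩, hd⟩ := h r ε hε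
    exact ⟨s, hs, by rwa [dist_comm, dist_eq_norm] at hd⟩
  · intro h r ε hε
    obtain ⟨s, hs, hn⟩ := h r ε hε
    exact ⟨T s, ⟨s, hs, rfl⟩, by rwa [dist_eq_norm, norm_sub_rev]⟩

/-- Let `(T_s)` be a bounded representation of a commutative monoid on a Banach
space and let `P` be a projection commuting with every `T_s`. If (a) the restrictions
`T_s|_{ker P}` converge to `0` in the operator norm, and (b) the set `{T_s|_{PE} : s ∈ S}` is
relatively compact in `L(PE)`, then the semigroup at infinity is non-empty and compact and the
projection at infinity `P_∞` satisfies `P_∞E ⊆ PE` and `ker P ⊆ ker P_∞`. If additionally (c)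
for no `0 ≠ x ∈ PE` the net `(T_s x)` converges to `0`, then `P_∞ = P`. -/
theorem statement5 {E : Type*} [NormedAddCommGroup E] [NormedSpace ℝ E] [CompleteSpace E]
    {S : Type*} [AddCommMonoid S] (T : S → E →L[ℝ] E)
    (hT0 : T 0 = 1) (hTmul : ∀ s t : S, T (s + t) = T s * T t)
    (hbdd : ∃ M : ℝ, ∀ s : S, ‖T s‖ ≤ M)
    (P : E →L[ℝ] E) (hproj : P * P = P)
    (hcomm : ∀ s : S, P * T s = T s * P)
    (ha : ∀ ε : ℝ, 0 < ε → ∀ᶠ s in sgFilter S, ∀ x : E, P x = 0 → ‖T s x‖ ≤ ε * ‖x‖)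
    (hb : IsCompact (closure (Set.range (fun s : S =>
      restrictCLM (T s) (LinearMap.range P) (fun x hx => by
        obtain ⟨y, rfl⟩ := hx
        refine (LinearMap.mem_range (f := (P : E →ₗ[ℝ] E))).mpr ⟨T s y, ?_⟩
        have h := congrArg (fun A : E →L[ℝ] E => A y) (hcomm s)
        simpa using h))))) :
    ((sgAtInfty T).Nonempty ∧ IsCompact (sgAtInfty T) ∧
      (∀ Q : E →L[ℝ] E, IsNeutralAtInfty T Q →
        LinearMap.range (Q : E →ₗ[ℝ] E) ≤ LinearMap.range (P : E →ₗ[ℝ] E) ∧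
          LinearMap.ker (P : E →ₗ[ℝ] E) ≤ LinearMap.ker (Q : E →ₗ[ℝ] E))) ∧
    ((∀ x : E, x ∈ LinearMap.range (P : E →ₗ[ℝ] E) → x ≠ 0 →
        ¬ Tendsto (fun s => T s x) (sgFilter S) (𝓝 0)) →
      ∀ Q : E →L[ℝ] E, IsNeutralAtInfty T Q → Q = P) := by
  classical
  set p : Submodule ℝ E := LinearMap.range (P : E →ₗ[ℝ] E) with hp
  have hmemP : ∀ x : E, P x ∈ p := fun x => LinearMap.mem_range_self _ x
  have hPidem : ∀ x : E, P (P x) = P x := by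
    intro x
    have h := congrArg (fun A : E →L[ℝ] E => A x) hproj
    simpa using h
  have hPy : ∀ y ∈ p, P y = y := by
    rintro y ⟨z, rfl⟩
    simpa using hPidem z
  -- The transfer map Φ : L(PE) → L(E), A ↦ incl ∘ A ∘ (P : E → PE).
  set π : E →L[ℝ] p := P.codRestrict p hmemP with hπ
  set Φ : (p →L[ℝ] p) →L[ℝ] (E →L[ℝ] E) :=
    (ContinuousLinearMap.compL ℝ E p E p.subtypeL).comp
      ((ContinuousLinearMap.compL ℝ E p p).flip π) with hΦ
  have hΦapply : ∀ (A : p →L[ℝ] p) (x : E), Φ A x = (A ⟨P x, hmemP x⟩ : E) := by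
    intro A x; rfl
  set R : S → (p →L[ℝ] p) := fun s => restrictCLM (T s) p (fun x hx => by
    obtain ⟨y, rfl⟩ := hx
    refine (LinearMap.mem_range (f := (P : E →ₗ[ℝ] E))).mpr ⟨T s y, ?_⟩
    have h := congrArg (fun A : E →L[ℝ] E => A y) (hcomm s)
    simpa using h) with hR
  have hbR : IsCompact (closure (Set.range R)) := hb
  have hΦR : ∀ s : S, Φ (R s) = T s * P := by
    intro s
    ext x
    rw [hΦapply]
    rfl
  set C : Set (E →L[ℝ] E) := Φ '' (closure (Set.range R)) with hC
  have hCcomp : IsCompact C := hbR.image Φ.continuous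
  have hCclosed : IsClosed C := hCcomp.isClosed
  have hTC : ∀ s : S, T s * P ∈ C := fun s =>
    ⟨R s, subset_closure (Set.mem_range_self s), hΦR s⟩
  have hrangeC : ∀ B ∈ C, ∀ x : E, B x ∈ p := by
    rintro B ⟨A, -, rfl⟩ x
    rw [hΦapply]
    exact (A ⟨P x, hmemP x⟩).2
  -- From (a): the tail bound ‖T s - T s * P‖ ≤ ε.
  have haux : ∀ ε : ℝ, 0 < ε → ∃ r : S, ∀ s, sgLE r s → ‖T s - T s * P‖ ≤ ε := by
    intro ε hε
    have hP1 : (0:ℝ) < 1 + ‖P‖ := by positivity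
    obtain ⟨r, hr⟩ := (sgFilter_eventually _).mp (ha (ε / (1 + ‖P‖)) (by positivity))
    refine ⟨r, fun s hs => ?_⟩
    refine ContinuousLinearMap.opNorm_le_bound _ hε.le (fun x => ?_)
    have hx0 : P (x - P x) = 0 := by
      rw [map_sub, hPidem x, sub_self]
    have h1 : ‖T s (x - P x)‖ ≤ ε / (1 + ‖P‖) * ‖x - P x‖ := hr s hs _ hx0
    have h2 : (T s - T s * P) x = T s (x - P x) := by
      simp [ContinuousLinearMap.sub_apply, ContinuousLinearMap.mul_apply, map_sub]
    rw [h2]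
    have h3 : ‖x - P x‖ ≤ (1 + ‖P‖) * ‖x‖ := by
      have h4 := norm_sub_le x (P x)
      have h5 := P.le_opNorm x
      nlinarith [norm_nonneg x]
    calc ‖T s (x - P x)‖ ≤ ε / (1 + ‖P‖) * ((1 + ‖P‖) * ‖x‖) :=
          le_trans h1 (mul_le_mul_of_nonneg_left h3 (by positivity))
      _ = ε * ‖x‖ := by field_simp
  -- Cluster points along cofinal subsets.
  have hcluster : ∀ q : S → Prop, (∀ r : S, ∃ s, sgLE r s ∧ q s) →
      ∃ B, B ∈ C ∧ B ∈ sgAtInfty T ∧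
        ∀ r : S, ∀ ε : ℝ, 0 < ε → ∃ s, sgLE r s ∧ q s ∧ ‖T s * P - B‖ < ε := by
    intro q hq
    set D : S → Set (E →L[ℝ] E) :=
      fun r => closure ((fun s => T s * P) '' {s | sgLE r s ∧ q s}) with hD
    have hDsub : ∀ r, D r ⊆ C := by
      intro r
      refine closure_minimal ?_ hCclosed
      rintro _ ⟨s, -, rfl⟩
      exact hTC s
    have hDne : ∀ r, (D r).Nonempty := by
      intro r
      obtain ⟨s, hs, hqs⟩ := hq r
      exact ⟨T s * P, subset_closure ⟨s, ⟨hs, hqs⟩, rfl⟩⟩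
    have hDdir : Directed (· ⊇ ·) D := by
      intro a b
      refine ⟨a + b, closure_mono ?_, closure_mono ?_⟩
      · rintro _ ⟨s, ⟨hs, hqs⟩, rfl⟩
        exact ⟨s, ⟨sgLE_trans ⟨b, rfl⟩ hs, hqs⟩, rfl⟩
      · rintro _ ⟨s, ⟨hs, hqs⟩, rfl⟩
        exact ⟨s, ⟨sgLE_trans ⟨a, add_comm a b⟩ hs, hqs⟩, rfl⟩
    haveI : Nonempty S := ⟨0⟩
    obtain ⟨B, hB⟩ := IsCompact.nonempty_iInter_of_directed_nonempty_isCompact_isClosed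
      D hDdir hDne (fun r => hCcomp.of_isClosed_subset isClosed_closure (hDsub r))
      (fun r => isClosed_closure)
    have hBC : B ∈ C := hDsub 0 (Set.mem_iInter.mp hB 0)
    have happrox : ∀ r : S, ∀ ε : ℝ, 0 < ε →
        ∃ s, sgLE r s ∧ q s ∧ ‖T s * P - B‖ < ε := by
      intro r ε hε
      have hBr := Set.mem_iInter.mp hB r
      obtain ⟨b, ⟨s, ⟨hs, hqs⟩, rfl⟩, hd⟩ := Metric.mem_closure_iff.mp hBr ε hε
      exact ⟨s, hs, hqs, by rwa [dist_comm, dist_eq_norm] at hd⟩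
    refine ⟨B, hBC, ?_, happrox⟩
    rw [mem_sgAtInfty_iff]
    intro r ε hε
    obtain ⟨r₀, hr₀⟩ := haux (ε/2) (by positivity)
    obtain ⟨s, hs, -, hns⟩ := happrox (r + r₀) (ε/2) (by positivity)
    refine ⟨s, sgLE_trans ⟨r₀, rfl⟩ hs, ?_⟩
    have h1 : ‖T s - T s * P‖ ≤ ε/2 := hr₀ s (sgLE_trans ⟨r, add_comm r r₀⟩ hs)
    have h2 : ‖T s - B‖ ≤ ‖T s - T s * P‖ + ‖T s * P - B‖ := by
      have := dist_triangle (T s) (T s * P) B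
      simpa [dist_eq_norm] using this
    linarith
  -- the semigroup at infinity is contained in C
  have hsub : sgAtInfty T ⊆ C := by
    intro A hA
    rw [← hCclosed.closure_eq]
    rw [Metric.mem_closure_iff]
    intro ε hε
    obtain ⟨r₀, hr₀⟩ := haux (ε/2) (by positivity)
    obtain ⟨s, hs, hns⟩ := (mem_sgAtInfty_iff T A).mp hA r₀ (ε/2) (by positivity)
    refine ⟨T s * P, hTC s, ?_⟩
    have h1 : ‖T s - T s * P‖ ≤ ε/2 := hr₀ s hs
    have h2 : dist A (T s * P) ≤ dist A (T s) + dist (T s) (T s * P) := dist_triangle _ _ _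
    simp only [dist_eq_norm] at h2
    rw [dist_eq_norm]
    have h3 : ‖A - T s‖ = ‖T s - A‖ := norm_sub_rev _ _
    linarith
  have hclosed : IsClosed (sgAtInfty T) := isClosed_iInter (fun r => isClosed_closure)
  have hcompact : IsCompact (sgAtInfty T) := hCcomp.of_isClosed_subset hclosed hsub
  -- range and kernel facts
  have hker : ∀ Q : E →L[ℝ] E, Q ∈ sgAtInfty T → LinearMap.ker (P : E →ₗ[ℝ] E) ≤ LinearMap.ker (Q : E →ₗ[ℝ] E) := by
    intro Q hQ x hx
    have hx0 : P x = 0 := hx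
    have key : ∀ ε : ℝ, 0 < ε → ‖Q x‖ ≤ ε := by
      intro ε hε
      have hxpos : (0:ℝ) < ‖x‖ + 1 := by positivity
      set ε' : ℝ := ε / (2 * (‖x‖ + 1)) with hε'def
      have hε'pos : 0 < ε' := by positivity
      obtain ⟨r₁, hr₁⟩ := (sgFilter_eventually _).mp (ha ε' hε'pos)
      obtain ⟨s, hs, hns⟩ := (mem_sgAtInfty_iff T Q).mp hQ r₁ ε' hε'pos
      have h1 : ‖T s x‖ ≤ ε' * ‖x‖ := hr₁ s hs x hx0
      have h2 : ‖Q x - T s x‖ ≤ ‖Q - T s‖ * ‖x‖ := by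
        simpa using (Q - T s).le_opNorm x
      have h3 : ‖Q - T s‖ ≤ ε' := by
        rw [norm_sub_rev]; linarith
      have h4 : ‖Q x‖ ≤ ‖Q x - T s x‖ + ‖T s x‖ := by
        have := norm_add_le (Q x - T s x) (T s x)
        simpa using this
      have h2' : ‖Q x - T s x‖ ≤ ε' * ‖x‖ :=
        h2.trans (mul_le_mul_of_nonneg_right h3 (norm_nonneg x))
      have h8 : ε' * ‖x‖ ≤ ε' * (‖x‖ + 1) :=
        mul_le_mul_of_nonneg_left (by linarith) hε'pos.le
      have h5 : 2 * (ε' * (‖x‖ + 1)) = ε := by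
        rw [hε'def]; field_simp
      linarith
    have h6 : ‖Q x‖ ≤ 0 := by
      refine le_of_forall_pos_le_add ?_
      intro ε hε
      simpa using key ε hε
    have : Q x = 0 := norm_le_zero_iff.mp h6
    exact this
  have hrange : ∀ Q : E →L[ℝ] E, Q ∈ sgAtInfty T →
      LinearMap.range (Q : E →ₗ[ℝ] E) ≤ LinearMap.range (P : E →ₗ[ℝ] E) := by
    intro Q hQ
    rintro _ ⟨x, rfl⟩
    exact hrangeC Q (hsub hQ) x
  obtain ⟨B₀, -, hB₀mem, -⟩ := hcluster (fun _ => True) (fun r => ⟨r, sgLE_refl r, trivial⟩)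
  refine ⟨⟨⟨B₀, hB₀mem⟩, hcompact, fun Q hQn => ⟨hrange Q hQn.1, hker Q hQn.1⟩⟩, ?_⟩
  -- Part 2
  intro hc Q hQn
  obtain ⟨hQmem, hQneut⟩ := hQn
  have hQQ : Q * Q = Q := (hQneut Q hQmem).1
  ext x
  have hxk : x - P x ∈ LinearMap.ker (P : E →ₗ[ℝ] E) := by
    rw [LinearMap.mem_ker]
    show P (x - P x) = 0
    rw [map_sub, hPidem x, sub_self]
  have hxker : Q (x - P x) = 0 := hker Q hQmem hxk
  set y₀ : E := P x with hy₀
  set y : E := y₀ - Q y₀ with hy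
  have hy₀p : y₀ ∈ p := hmemP x
  have hQy₀p : Q y₀ ∈ p := hrange Q hQmem ⟨y₀, rfl⟩
  have hyp : y ∈ p := p.sub_mem hy₀p hQy₀p
  have hQQy₀ : Q (Q y₀) = Q y₀ := by
    have h := congrArg (fun A : E →L[ℝ] E => A y₀) hQQ
    simpa using h
  have hQy : Q y = 0 := by
    rw [hy, map_sub, hQQy₀, sub_self]
  have hPyy : P y = y := hPy y hyp
  have htend : Tendsto (fun s => T s y) (sgFilter S) (𝓝 0) := by
    by_contra hnot
    rw [NormedAddCommGroup.tendsto_nhds_zero] at hnot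
    push_neg at hnot
    obtain ⟨ε, hε, hev⟩ := hnot
    have hcof : ∀ r : S, ∃ s, sgLE r s ∧ ε ≤ ‖T s y‖ := by
      intro r
      by_contra hno
      push_neg at hno
      exact hev ((sgFilter_eventually _).mpr ⟨r, fun s hs => not_le.mpr (hno s hs)⟩)
    obtain ⟨B, hBC, hBmem, hBapprox⟩ := hcluster (fun s => ε ≤ ‖T s y‖) hcof
    have hBy0 : B y = 0 := by
      have hBQ : B * Q = B := (hQneut B hBmem).2
      have h := congrArg (fun A : E →L[ℝ] E => A y) hBQ
      simp only [ContinuousLinearMap.mul_apply] at h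
      rw [hQy, map_zero] at h
      exact h.symm
    have hByε : ε ≤ ‖B y‖ := by
      refine le_of_forall_pos_le_add ?_
      intro δ hδ
      have hypos : (0:ℝ) < ‖y‖ + 1 := by positivity
      set δ' : ℝ := δ / (‖y‖ + 1) with hδ'def
      obtain ⟨s, hs, hqs, hns⟩ := hBapprox 0 δ' (by positivity)
      have h1 : (T s * P) y = T s y := by
        rw [ContinuousLinearMap.mul_apply, hPyy]
      have h2 : ‖T s y - B y‖ ≤ ‖T s * P - B‖ * ‖y‖ := by
        have h := (T s * P - B).le_opNorm y
        rw [ContinuousLinearMap.sub_apply, h1] at h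
        exact h
      have h3 : ‖T s y‖ ≤ ‖T s y - B y‖ + ‖B y‖ := by
        have := norm_add_le (T s y - B y) (B y)
        simpa using this
      have h4 : δ' * (‖y‖ + 1) = δ := by
        rw [hδ'def]; field_simp
      have h2' : ‖T s y - B y‖ ≤ δ' * ‖y‖ :=
        h2.trans (mul_le_mul_of_nonneg_right hns.le (norm_nonneg y))
      have h5 : δ' * ‖y‖ ≤ δ' * (‖y‖ + 1) :=
        mul_le_mul_of_nonneg_left (by linarith) (by positivity)
      linarith
    have hByne : B y ≠ 0 := by
      intro h
      rw [h, norm_zero] at hByε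
      linarith
    exact hByne hBy0
  have hy0 : y = 0 := by
    by_contra hyne
    exact hc y hyp hyne htend
  have hQy₀ : Q y₀ = y₀ := by
    have := sub_eq_zero.mp (hy ▸ hy0)
    exact this.symm
  have hxsum : P x + (x - P x) = x := by abel
  show Q x = P x
  calc Q x = Q (P x + (x - P x)) := by rw [hxsum]
    _ = Q (P x) + Q (x - P x) := map_add _ _ _
    _ = y₀ + 0 := by rw [hxker, ← hy₀, hQy₀]
    _ = P x := by rw [add_zero]
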